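/- Let A be a commutative ring, I ⊆ A[x₁,…,xₙ] an ideal with quotient B = A[x]/I, and J ⊆ A[y₁,…,yₘ] an ideal with quotient C. Suppose H ⊆ A[x,y] is an ideal such that in every A-algebra D, the zero set of H restricted to (zero set of I) × Dᵐ is the graph of a function from the zero set of I to the zero set of J. Then there exists an m-tuple of polynomials p ∈ A[x]ᵐ such that for every A-algebra D and every a in the zero set of I in Dⁿ, the function sends a to p(a). (Every Zariski-definable map between affine schemes is given by polynomials.) -/

import Mathlib

open MvPolynomial

universe u

theorem stmt6 {A : Type u} [CommRing A] {n m : ℕ}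
    (I : Ideal (MvPolynomial (Fin n) A)) (J : Ideal (MvPolynomial (Fin m) A))
    (H : Ideal (MvPolynomial (Fin n ⊕ Fin m) A))
    (hfun : ∀ (D : Type u) [CommRing D] [Algebra A D], ∀ a : Fin n → D,
      (∀ f ∈ I, aeval a f = 0) →
        ∃! b : Fin m → D, ∀ h ∈ H, aeval (Sum.elim a b) h = 0)
    (him : ∀ (D : Type u) [CommRing D] [Algebra A D], ∀ (a : Fin n → D) (b : Fin m → D),
      (∀ f ∈ I, aeval a f = 0) → (∀ h ∈ H, aeval (Sum.elim a b) h = 0) →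
        ∀ g ∈ J, aeval b g = 0) :
    ∃ p : Fin m → MvPolynomial (Fin n) A,
      ∀ (D : Type u) [CommRing D] [Algebra A D], ∀ a : Fin n → D,
        (∀ f ∈ I, aeval a f = 0) →
          ∀ h ∈ H, aeval (Sum.elim a fun j => aeval a (p j)) h = 0 := by
  classical
  set B := MvPolynomial (Fin n) A ⧸ I
  let acan : Fin n → B := fun i => Ideal.Quotient.mk I (X i)
  have hacan : ∀ f ∈ I, aeval acan f = 0 := by
    intro f hf
    have : (aeval acan : MvPolynomial (Fin n) A →ₐ[A] B) = Ideal.Quotient.mkₐ A I :=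
      MvPolynomial.algHom_ext fun i => by rw [aeval_X, Ideal.Quotient.mkₐ_eq_mk]
    rw [this, Ideal.Quotient.mkₐ_eq_mk, Ideal.Quotient.eq_zero_iff_mem]
    exact hf
  obtain ⟨b, hb, -⟩ := hfun B acan hacan
  choose p hp using fun j => Ideal.Quotient.mk_surjective (I := I) (b j)
  refine ⟨p, ?_⟩
  intro D _ _ a ha h hh
  let φ : B →ₐ[A] D := Ideal.Quotient.liftₐ I (aeval a) (fun f hf => ha f hf)
  have hφmk : ∀ f, φ (Ideal.Quotient.mk I f) = aeval a f := fun f => by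
    show Ideal.Quotient.liftₐ I (aeval a) (fun f hf => ha f hf) (Ideal.Quotient.mk I f) = _
    rw [Ideal.Quotient.liftₐ_apply]
    exact Ideal.Quotient.lift_mk _ _ _
  have key : φ.comp (aeval (Sum.elim acan b)) =
      aeval (Sum.elim a fun j => aeval a (p j)) := by
    apply MvPolynomial.algHom_ext
    rintro (i | j) <;> simp [acan, hφmk, ← hp]
  calc aeval (Sum.elim a fun j => aeval a (p j)) h
      = φ (aeval (Sum.elim acan b) h) := by rw [← key]; rfl
    _ = 0 := by rw [hb h hh, map_zero]
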